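/- Under the hypotheses of the previous drift condition (∑_j P(i,j) W(j) ≤ exp(k − ℓ(i)) W(i) for all i, with W ≥ 1, ℓ ≥ 0), for the Markov chain (X_t) with kernel P and any initial state i, limsup_{T→∞} (1/T) · log E_i[ exp(∑_{t=0}^{T−1} ℓ(X_t)) ] ≤ k. -/

import Mathlib

/-- Under the multiplicative drift condition, the risk-sensitive ergodic value of the
running cost `ℓ` is bounded by the drift constant `k`:
`limsup_T (1/T) log E_i[exp(∑_{t<T} ℓ(X_t))] ≤ k`, where the expectation is the `T`-fold
iterate of `f ↦ (i ↦ exp(ℓ i) ∑_j P(i,j) f(j))` applied to the constant function `1`. -/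
theorem drift_risk_sensitive_value_bound
    {S : Type*} [Countable S] (P : S → S → ℝ)
    (hP0 : ∀ i j, 0 ≤ P i j) (hP1 : ∀ i, HasSum (P i) 1)
    (W ℓ : S → ℝ) (hW : ∀ i, 1 ≤ W i) (hℓ : ∀ i, 0 ≤ ℓ i) (k : ℝ)
    (hsum : ∀ i, Summable fun j => P i j * W j)
    (hdrift : ∀ i, ∑' j, P i j * W j ≤ Real.exp (k - ℓ i) * W i) :
    ∀ i : S,
      Filter.limsup
        (fun T : ℕ =>
          (1 / (T : ℝ)) * Real.log
            (((fun f : S → ℝ => fun i => Real.exp (ℓ i) * ∑' j, P i j * f j)^[T]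
              (fun _ => 1)) i))
        Filter.atTop ≤ k := by
  intro i
  set Φ : (S → ℝ) → (S → ℝ) := fun f i => Real.exp (ℓ i) * ∑' j, P i j * f j with hΦ
  have key : ∀ T : ℕ, ∀ i, 1 ≤ (Φ^[T] (fun _ => 1)) i ∧
      (Φ^[T] (fun _ => 1)) i ≤ Real.exp (k * T) * W i := by
    intro T
    induction T with
    | zero =>
      intro i
      simp only [Function.iterate_zero, id_eq, Nat.cast_zero, mul_zero, Real.exp_zero, one_mul]
      exact ⟨le_refl 1, hW i⟩
    | succ T ih =>
      intro i
      rw [Function.iterate_succ_apply']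
      set f := Φ^[T] (fun _ => (1:ℝ)) with hf
      have hf1 : ∀ j, 1 ≤ f j := fun j => (ih j).1
      have hfW : ∀ j, f j ≤ Real.exp (k * T) * W j := fun j => (ih j).2
      have hsummW : Summable (fun j => P i j * (Real.exp (k * T) * W j)) := by
        have := (hsum i).mul_left (Real.exp (k * T))
        exact this.congr (fun j => by ring)
      have hsummf : Summable (fun j => P i j * f j) :=
        Summable.of_nonneg_of_le
          (fun j => mul_nonneg (hP0 i j) (le_trans zero_le_one (hf1 j)))
          (fun j => mul_le_mul_of_nonneg_left (hfW j) (hP0 i j)) hsummW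
      have hone : (1:ℝ) ≤ ∑' j, P i j * f j := by
        have h1 : (1:ℝ) = ∑' j, P i j * 1 := by
          simpa using (hP1 i).tsum_eq.symm
        rw [h1]
        exact Summable.tsum_le_tsum (fun j => mul_le_mul_of_nonneg_left (hf1 j) (hP0 i j))
          (by simpa using (hP1 i).summable) hsummf
      constructor
      · calc (1:ℝ) ≤ ∑' j, P i j * f j := hone
          _ ≤ Real.exp (ℓ i) * ∑' j, P i j * f j :=
            le_mul_of_one_le_left (le_trans zero_le_one hone) (Real.one_le_exp (hℓ i))
      · have hb : ∑' j, P i j * f j ≤ Real.exp (k * T) * ∑' j, P i j * W j := by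
          calc ∑' j, P i j * f j ≤ ∑' j, P i j * (Real.exp (k * T) * W j) :=
              Summable.tsum_le_tsum (fun j => mul_le_mul_of_nonneg_left (hfW j) (hP0 i j)) hsummf hsummW
            _ = Real.exp (k * T) * ∑' j, P i j * W j := by
              rw [← tsum_mul_left]
              congr 1
              ext j
              ring
        have hb2 : ∑' j, P i j * f j ≤ Real.exp (k * T) * (Real.exp (k - ℓ i) * W i) :=
          le_trans hb (mul_le_mul_of_nonneg_left (hdrift i) (Real.exp_nonneg _))
        calc Real.exp (ℓ i) * ∑' j, P i j * f j
            ≤ Real.exp (ℓ i) * (Real.exp (k * T) * (Real.exp (k - ℓ i) * W i)) :=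
              mul_le_mul_of_nonneg_left hb2 (Real.exp_nonneg _)
          _ = Real.exp (k * (T + 1 : ℕ)) * W i := by
              rw [show Real.exp (ℓ i) * (Real.exp (k * T) * (Real.exp (k - ℓ i) * W i))
                  = Real.exp (ℓ i) * Real.exp (k * T) * Real.exp (k - ℓ i) * W i by ring,
                ← Real.exp_add, ← Real.exp_add]
              push_cast
              ring_nf
  have hpos : ∀ T : ℕ, 0 < (Φ^[T] (fun _ => (1:ℝ))) i :=
    fun T => lt_of_lt_of_le one_pos (key T i).1
  have hf_nonneg : ∀ T : ℕ,
      0 ≤ (1 / (T:ℝ)) * Real.log ((Φ^[T] (fun _ => (1:ℝ))) i) :=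
    fun T => mul_nonneg (by positivity) (Real.log_nonneg (key T i).1)
  have hle : ∀ᶠ T : ℕ in Filter.atTop,
      (1 / (T:ℝ)) * Real.log ((Φ^[T] (fun _ => (1:ℝ))) i) ≤ k + Real.log (W i) / T := by
    filter_upwards [Filter.eventually_gt_atTop 0] with T hT
    have hT' : (0:ℝ) < T := Nat.cast_pos.mpr hT
    have hlog : Real.log ((Φ^[T] (fun _ => (1:ℝ))) i) ≤ k * T + Real.log (W i) := by
      calc Real.log ((Φ^[T] (fun _ => (1:ℝ))) i)
          ≤ Real.log (Real.exp (k * T) * W i) := Real.log_le_log (hpos T) (key T i).2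
        _ = k * T + Real.log (W i) := by
            rw [Real.log_mul (Real.exp_ne_zero _) (by linarith [hW i]), Real.log_exp]
    calc (1 / (T:ℝ)) * Real.log ((Φ^[T] (fun _ => (1:ℝ))) i)
        ≤ (1 / (T:ℝ)) * (k * T + Real.log (W i)) :=
          mul_le_mul_of_nonneg_left hlog (by positivity)
      _ = k + Real.log (W i) / T := by field_simp
  have htend : Filter.Tendsto (fun T : ℕ => k + Real.log (W i) / T)
      Filter.atTop (nhds k) := by
    have h0 : Filter.Tendsto (fun T : ℕ => Real.log (W i) / (T:ℝ)) Filter.atTop (nhds 0) :=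
      Filter.Tendsto.div_atTop tendsto_const_nhds tendsto_natCast_atTop_atTop
    simpa using tendsto_const_nhds.add h0
  have hlim : Filter.limsup (fun T : ℕ => k + Real.log (W i) / T) Filter.atTop = k :=
    htend.limsup_eq
  calc Filter.limsup
        (fun T : ℕ => (1 / (T:ℝ)) * Real.log ((Φ^[T] (fun _ => (1:ℝ))) i)) Filter.atTop
      ≤ Filter.limsup (fun T : ℕ => k + Real.log (W i) / T) Filter.atTop := by
        exact Filter.limsup_le_limsup hle
          (Filter.IsBoundedUnder.isCoboundedUnder_le
            ⟨0, Filter.eventually_map.mpr (Filter.Eventually.of_forall hf_nonneg)⟩)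
          htend.isBoundedUnder_le
    _ = k := hlim
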